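/- Let G be a connected simple graph with vertex set V of size n and edge set E, let v₀ ∈ V be a fixed vertex, and let F be a set of n−1 edges of G. Let M be the square submatrix of the reduced incidence matrix of G over ℤ/2ℤ with rows indexed by V \ {v₀} and columns indexed by F. Then M is invertible if and only if there exists exactly one bijection σ : V \ {v₀} → F such that for every u ∈ V \ {v₀} the entry M_{u, σ(u)} is nonzero (i.e., the determinant expansion of M contains a unique nonzero monomial). -/
import Mathlib


/-- The square submatrix of the reduced incidence matrix of a graph over `ZMod 2`,
with rows indexed by the vertices different from `v₀` and columns indexed by the
edges in `F`: the `(u, e)` entry is `1` if `u` is an endpoint of `e`, else `0`. -/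
def redIncSub {V : Type*} [DecidableEq V] (v₀ : V) (F : Finset (Sym2 V)) :
    Matrix {u : V // u ≠ v₀} {e : Sym2 V // e ∈ F} (ZMod 2) :=
  Matrix.of fun u e => if (u : V) ∈ (e : Sym2 V) then 1 else 0

/-- A (possibly rectangular-typed) matrix is invertible if it has a two-sided inverse. -/
def MatInvertible {A B : Type*} [Fintype A] [Fintype B] [DecidableEq A] [DecidableEq B]
    (M : Matrix A B (ZMod 2)) : Prop :=
  ∃ N : Matrix B A (ZMod 2), M * N = 1 ∧ N * M = 1

section Aux
open Matrix

variable {V : Type*} [Fintype V] [DecidableEq V]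

lemma redIncSub_ne_zero_iff (v₀ : V) (F : Finset (Sym2 V)) (u : {u : V // u ≠ v₀})
    (e : {e : Sym2 V // e ∈ F}) :
    redIncSub v₀ F u e ≠ 0 ↔ (u : V) ∈ (e : Sym2 V) := by
  simp [redIncSub]

lemma redIncSub_unique (v₀ : V) (F : Finset (Sym2 V))
    (N : Matrix {e : Sym2 V // e ∈ F} {u : V // u ≠ v₀} (ZMod 2))
    (hN : N * redIncSub v₀ F = 1)
    (σ τ : {u : V // u ≠ v₀} ≃ {e : Sym2 V // e ∈ F})
    (hσ : ∀ u, redIncSub v₀ F u (σ u) ≠ 0)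
    (hτ : ∀ u, redIncSub v₀ F u (τ u) ≠ 0) : σ = τ := by
  classical
  by_contra hne
  set M := redIncSub v₀ F with hMdef
  set c : {e : Sym2 V // e ∈ F} → ZMod 2 :=
    fun e => if σ.symm e ≠ τ.symm e then 1 else 0 with hc
  have hσmem : ∀ u, (u : V) ∈ ((σ u : {e : Sym2 V // e ∈ F}) : Sym2 V) :=
    fun u => (redIncSub_ne_zero_iff v₀ F u (σ u)).1 (hσ u)
  have hτmem : ∀ u, (u : V) ∈ ((τ u : {e : Sym2 V // e ∈ F}) : Sym2 V) :=
    fun u => (redIncSub_ne_zero_iff v₀ F u (τ u)).1 (hτ u)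
  have hMc : M *ᵥ c = 0 := by
    funext u
    have key : ∀ e, M u e * c e
        = (if e = σ u then (if σ u ≠ τ u then (1 : ZMod 2) else 0) else 0)
        + (if e = τ u then (if σ u ≠ τ u then (1 : ZMod 2) else 0) else 0) := by
      intro e
      by_cases hD : σ.symm e = τ.symm e
      · have hce : c e = 0 := by simp [hc, hD]
        have h1 : ∀ h1 : e = σ u, σ u = τ u := by
          intro h1
          have hu : σ.symm e = u := by rw [h1]; simp
          have hu2 : τ.symm e = u := by rw [← hD, hu]
          rw [← h1]
          conv_lhs => rw [← τ.apply_symm_apply e, hu2]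
        have h2 : ∀ h2 : e = τ u, σ u = τ u := by
          intro h2
          have hu : τ.symm e = u := by rw [h2]; simp
          have hu2 : σ.symm e = u := by rw [hD, hu]
          rw [← h2]
          conv_rhs => rw [← σ.apply_symm_apply e, hu2]
        have t1 : (if e = σ u then (if σ u ≠ τ u then (1 : ZMod 2) else 0) else 0) = 0 := by
          by_cases he1 : e = σ u
          · rw [if_pos he1, if_neg (fun h => h (h1 he1))]
          · rw [if_neg he1]
        have t2 : (if e = τ u then (if σ u ≠ τ u then (1 : ZMod 2) else 0) else 0) = 0 := by
          by_cases he2 : e = τ u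
          · rw [if_pos he2, if_neg (fun h => h (h2 he2))]
          · rw [if_neg he2]
        rw [hce, mul_zero, t1, t2, add_zero]
      · have hce : c e = 1 := by simp [hc, hD]
        have hσe : ((σ.symm e : {u : V // u ≠ v₀}) : V) ∈ (e : Sym2 V) := by
          have := hσmem (σ.symm e); rwa [σ.apply_symm_apply] at this
        have hτe : ((τ.symm e : {u : V // u ≠ v₀}) : V) ∈ (e : Sym2 V) := by
          have := hτmem (τ.symm e); rwa [τ.apply_symm_apply] at this
        have hcoene : ((σ.symm e : {u : V // u ≠ v₀}) : V) ≠ ((τ.symm e : {u : V // u ≠ v₀}) : V) :=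
          fun h => hD (Subtype.ext h)
        have he2 : (e : Sym2 V) = s(((σ.symm e : {u : V // u ≠ v₀}) : V),
            ((τ.symm e : {u : V // u ≠ v₀}) : V)) :=
          (Sym2.mem_and_mem_iff hcoene).1 ⟨hσe, hτe⟩
        have hmemiff : (u : V) ∈ (e : Sym2 V) ↔ e = σ u ∨ e = τ u := by
          rw [he2, Sym2.mem_iff]
          constructor
          · rintro (h | h)
            · left
              have : σ.symm e = u := (Subtype.ext h).symm
              rw [← this, σ.apply_symm_apply]
            · right
              have : τ.symm e = u := (Subtype.ext h).symm
              rw [← this, τ.apply_symm_apply]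
          · rintro (h | h)
            · left; rw [h]; simp
            · right; rw [h]; simp
        by_cases he1 : e = σ u
        · have hP : σ u ≠ τ u := by
            intro h
            apply hD
            rw [he1, Equiv.symm_apply_apply, h, Equiv.symm_apply_apply]
          have he2' : e ≠ τ u := by
            intro h; exact hP (by rw [← he1, ← h])
          have hM1 : M u e = 1 := by
            have : (u : V) ∈ (e : Sym2 V) := hmemiff.2 (Or.inl he1)
            simp [hMdef, redIncSub, this]
          rw [hM1, hce, if_pos he1, if_neg he2', if_pos hP, mul_one, add_zero]
        · by_cases he2' : e = τ u
          · have hP : σ u ≠ τ u := by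
              intro h
              apply hD
              rw [he2', Equiv.symm_apply_apply, ← h, Equiv.symm_apply_apply]
            have hM1 : M u e = 1 := by
              have : (u : V) ∈ (e : Sym2 V) := hmemiff.2 (Or.inr he2')
              simp [hMdef, redIncSub, this]
            rw [hM1, hce, if_neg he1, if_pos he2', if_pos hP, mul_one, zero_add]
          · have hM0 : M u e = 0 := by
              have : ¬ (u : V) ∈ (e : Sym2 V) := by
                rw [hmemiff]; rintro (h | h); exacts [he1 h, he2' h]
              simp [hMdef, redIncSub, this]
            rw [hM0, zero_mul, if_neg he1, if_neg he2', add_zero]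
    show (M *ᵥ c) u = 0
    rw [Matrix.mulVec, dotProduct]
    calc ∑ e, M u e * c e
        = ∑ e, ((if e = σ u then (if σ u ≠ τ u then (1 : ZMod 2) else 0) else 0)
          + (if e = τ u then (if σ u ≠ τ u then (1 : ZMod 2) else 0) else 0)) :=
          Finset.sum_congr rfl fun e _ => key e
      _ = (if σ u ≠ τ u then (1 : ZMod 2) else 0) + (if σ u ≠ τ u then (1 : ZMod 2) else 0) := by
          rw [Finset.sum_add_distrib]
          congr 1 <;> simp
      _ = 0 := CharTwo.add_self_eq_zero _
  have hc0 : c = 0 := by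
    have h1 : (N * M) *ᵥ c = c := by rw [hN, Matrix.one_mulVec]
    rw [← Matrix.mulVec_mulVec, hMc, Matrix.mulVec_zero] at h1
    exact h1.symm
  obtain ⟨u₀, hu₀⟩ : ∃ u, σ u ≠ τ u := by
    by_contra h
    push_neg at h
    exact hne (Equiv.ext h)
  have : c (σ u₀) = 1 := by
    have h1 : σ.symm (σ u₀) = u₀ := σ.symm_apply_apply u₀
    have h2 : τ.symm (σ u₀) ≠ u₀ := by
      intro h
      apply hu₀
      rw [← τ.apply_symm_apply (σ u₀), h]
    show (if σ.symm (σ u₀) ≠ τ.symm (σ u₀) then (1 : ZMod 2) else 0) = 1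
    rw [h1]
    exact if_pos (Ne.symm h2)
  rw [hc0] at this
  simp at this

end Aux

/-- the square submatrix `M` of the reduced incidence matrix of a connected
graph `G`, with rows indexed by `V \ {v₀}` and columns indexed by a set `F` of `n - 1`
edges, is invertible over `ZMod 2` if and only if there is exactly one bijection
`σ : V \ {v₀} → F` with `M (u, σ u) ≠ 0` for all `u` (a unique nonzero monomial in the
determinant expansion). -/
theorem reduced_incidence_invertible_iff_unique_nonzero_monomial
    {V : Type*} [Fintype V] [DecidableEq V] {n : ℕ} (hn : 2 ≤ n)
    (G : SimpleGraph V) (hG : G.Connected) (hV : Fintype.card V = n)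
    (v₀ : V) (F : Finset (Sym2 V)) (hF : ↑F ⊆ G.edgeSet) (hFc : F.card = n - 1) :
    MatInvertible (redIncSub v₀ F) ↔
      (∃! σ : {u : V // u ≠ v₀} ≃ {e : Sym2 V // e ∈ F},
        ∀ u, redIncSub v₀ F u (σ u) ≠ 0) := by
  classical
  set M := redIncSub v₀ F with hMdef
  have hcards : Fintype.card {u : V // u ≠ v₀} = Fintype.card {e : Sym2 V // e ∈ F} := by
    have h1 : Fintype.card {u : V // u ≠ v₀} = Fintype.card V - 1 := by
      have h2 := Fintype.card_subtype_compl (fun u : V => u = v₀)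
      simpa [Fintype.card_subtype_eq] using h2
    rw [h1, Fintype.card_coe, hFc, hV]
  set e₀ : {u : V // u ≠ v₀} ≃ {e : Sym2 V // e ∈ F} := Fintype.equivOfCardEq hcards with he₀
  set M' : Matrix {u : V // u ≠ v₀} {u : V // u ≠ v₀} (ZMod 2) := M.submatrix id ⇑e₀ with hM'
  have hMsub : M = M'.submatrix id ⇑e₀.symm := by
    ext u e
    simp [hM', Matrix.submatrix_apply]
  have hinv : MatInvertible M ↔ IsUnit M' := by
    constructor
    · rintro ⟨N, h1, h2⟩
      rw [isUnit_iff_exists]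
      refine ⟨N.submatrix ⇑e₀ id, ?_, ?_⟩
      · rw [hM', Matrix.submatrix_mul_equiv M N id e₀ id, h1, Matrix.submatrix_id_id]
      · have h3 := Matrix.submatrix_mul_equiv N M ⇑e₀ (Equiv.refl {u : V // u ≠ v₀}) ⇑e₀
        rw [h2, Matrix.submatrix_one_equiv] at h3
        exact h3
    · intro hU
      obtain ⟨N', h1, h2⟩ := isUnit_iff_exists.1 hU
      refine ⟨N'.submatrix ⇑e₀.symm id, ?_, ?_⟩
      · rw [hMsub, Matrix.submatrix_mul_equiv M' N' id e₀.symm id, h1, Matrix.submatrix_id_id]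
      · have h3 := Matrix.submatrix_mul_equiv N' M' ⇑e₀.symm
          (Equiv.refl {u : V // u ≠ v₀}) ⇑e₀.symm
        rw [h2, Matrix.submatrix_one_equiv] at h3
        rw [hMsub]
        exact h3
  have hdet : IsUnit M' ↔ M'.det ≠ 0 := by
    rw [Matrix.isUnit_iff_isUnit_det, isUnit_iff_ne_zero]
  have hdetsum : M'.det = ∑ π : Equiv.Perm {u : V // u ≠ v₀}, ∏ i, M' (π i) i := by
    rw [Matrix.det_apply]
    refine Finset.sum_congr rfl fun π _ => ?_
    rcases Int.units_eq_one_or (Equiv.Perm.sign π) with h | h <;> rw [h]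
    · rw [one_smul]
    · rw [Units.smul_def]
      push_cast
      rw [neg_smul, one_smul, CharTwo.neg_eq]
  have hone : ∀ x : ZMod 2, x ≠ 0 → x = 1 := by decide
  have hfact : ∀ π : Equiv.Perm {u : V // u ≠ v₀},
      (∏ i, M' (π i) i ≠ 0) ↔ ∀ u, M u ((π.symm.trans e₀) u) ≠ 0 := by
    intro π
    rw [Finset.prod_ne_zero_iff]
    constructor
    · intro h u
      have := h (π.symm u) (Finset.mem_univ _)
      simpa [hM', Matrix.submatrix_apply] using this
    · intro h i _
      have := h (π i)
      simpa [hM', Matrix.submatrix_apply] using this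
  constructor
  · intro hInv
    obtain ⟨N, hN1, hN2⟩ := hInv
    have hd : M'.det ≠ 0 := hdet.1 (hinv.1 ⟨N, hN1, hN2⟩)
    rw [hdetsum] at hd
    obtain ⟨π, -, hπ⟩ := Finset.exists_ne_zero_of_sum_ne_zero hd
    refine ⟨π.symm.trans e₀, (hfact π).1 hπ, ?_⟩
    intro τ hτ
    exact redIncSub_unique v₀ F N hN2 τ (π.symm.trans e₀) hτ ((hfact π).1 hπ)
  · rintro ⟨σ₀, h0, huniq⟩
    apply hinv.2
    apply hdet.2
    rw [hdetsum]
    set π₀ : Equiv.Perm {u : V // u ≠ v₀} := (σ₀.trans e₀.symm).symm with hπ₀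
    have hp0 : π₀.symm.trans e₀ = σ₀ := by
      ext u
      simp [hπ₀]
    have hprod : ∏ i, M' (π₀ i) i ≠ 0 := (hfact π₀).2 (by rw [hp0]; exact h0)
    have h1 : ∏ i, M' (π₀ i) i = 1 := hone _ hprod
    rw [Fintype.sum_eq_single π₀ ?_, h1]
    · exact one_ne_zero
    · intro π hπ
      by_contra hcne
      have heq := huniq (π.symm.trans e₀) ((hfact π).1 hcne)
      apply hπ
      have hs : π.symm = σ₀.trans e₀.symm := by
        rw [← heq]
        ext u
        simp
      rw [← π.symm_symm, hs, hπ₀]
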